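/- Let 0 < p < 1, let (Ω, 𝓕, P) be a probability space, let (X_n)_{n≥0} be a sequence of random variables with X_0 = 1 almost surely and X_n ∈ (0,1] almost surely for all n, let 𝓕_n = σ(X_0, …, X_n), and assume that for every n ≥ 1 and every bounded Borel measurable function g : ℝ → ℝ, E[g(X_n) | 𝓕_{n−1}] = (1 − p·X_{n−1})·g(X_{n−1}) + p·∫_0^{X_{n−1}} g(y) dy almost surely. Let f_0 : ℝ → ℝ be continuously differentiable on [0,1] and define f_n(x) = f_0(0) + ∫_0^x f_0'(s) / (1 − p·s)^n ds for n ≥ 1 and x ∈ [0,1]. Then the sequence (f_n(X_n))_{n≥0} is a martingale with respect to the filtration (𝓕_n)_{n≥0}. -/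

import Mathlib

open MeasureTheory intervalIntegral

lemma measurable_primitive_aux {h : ℝ → ℝ} (hm : Measurable h) :
    Measurable fun x => ∫ s in (0:ℝ)..x, h s := by
  have h1 : Measurable fun x : ℝ => ∫ y in Set.Ioc (0:ℝ) x, h y := by
    have hs : MeasurableSet {q : ℝ × ℝ | q.2 ∈ Set.Ioc (0:ℝ) q.1} :=
      (measurableSet_lt measurable_const measurable_snd).inter
        (measurableSet_le measurable_snd measurable_fst)
    have hF : StronglyMeasurable
        (fun q : ℝ × ℝ => if q.2 ∈ Set.Ioc (0:ℝ) q.1 then h q.2 else 0) :=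
      (Measurable.ite hs (hm.comp measurable_snd) measurable_const).stronglyMeasurable
    have key : StronglyMeasurable fun x : ℝ =>
        ∫ y, (fun q : ℝ × ℝ => if q.2 ∈ Set.Ioc (0:ℝ) q.1 then h q.2 else 0) (x, y) :=
      hF.integral_prod_right'
    have heq : ∀ x : ℝ, (∫ y in Set.Ioc (0:ℝ) x, h y)
        = ∫ y, (fun q : ℝ × ℝ => if q.2 ∈ Set.Ioc (0:ℝ) q.1 then h q.2 else 0) (x, y) := by
      intro x
      rw [← MeasureTheory.integral_indicator measurableSet_Ioc]
      simp [Set.indicator_apply]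
    simp_rw [heq]
    exact key.measurable
  have h2 : Measurable fun x : ℝ => ∫ y in Set.Ioc x (0:ℝ), h y := by
    have hs : MeasurableSet {q : ℝ × ℝ | q.2 ∈ Set.Ioc q.1 (0:ℝ)} :=
      (measurableSet_lt measurable_fst measurable_snd).inter
        (measurableSet_le measurable_snd measurable_const)
    have hF : StronglyMeasurable
        (fun q : ℝ × ℝ => if q.2 ∈ Set.Ioc q.1 (0:ℝ) then h q.2 else 0) :=
      (Measurable.ite hs (hm.comp measurable_snd) measurable_const).stronglyMeasurable
    have key : StronglyMeasurable fun x : ℝ =>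
        ∫ y, (fun q : ℝ × ℝ => if q.2 ∈ Set.Ioc q.1 (0:ℝ) then h q.2 else 0) (x, y) :=
      hF.integral_prod_right'
    have heq : ∀ x : ℝ, (∫ y in Set.Ioc x (0:ℝ), h y)
        = ∫ y, (fun q : ℝ × ℝ => if q.2 ∈ Set.Ioc q.1 (0:ℝ) then h q.2 else 0) (x, y) := by
      intro x
      rw [← MeasureTheory.integral_indicator measurableSet_Ioc]
      simp [Set.indicator_apply]
    simp_rw [heq]
    exact key.measurable
  exact h1.sub h2

theorem stmt14 {Ω : Type*} [m0 : MeasurableSpace Ω] (P : Measure Ω) [IsProbabilityMeasure P]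
    (p : ℝ) (hp : 0 < p) (hp1 : p < 1)
    (X : ℕ → Ω → ℝ) (hXmeas : ∀ n, Measurable (X n))
    (hX0 : ∀ᵐ ω ∂P, X 0 ω = 1)
    (hXmem : ∀ n, ∀ᵐ ω ∂P, X n ω ∈ Set.Ioc (0 : ℝ) 1)
    (ℱ : Filtration ℕ m0)
    (hℱ : ∀ n, ℱ n = ⨆ i ≤ n, MeasurableSpace.comap (X i) Real.measurableSpace)
    (hcond : ∀ n : ℕ, 1 ≤ n → ∀ g : ℝ → ℝ, Measurable g → (∃ C : ℝ, ∀ y, |g y| ≤ C) →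
      P[(fun ω => g (X n ω)) | ℱ (n - 1)] =ᵐ[P]
        fun ω => (1 - p * X (n - 1) ω) * g (X (n - 1) ω)
          + p * ∫ y in (0 : ℝ)..(X (n - 1) ω), g y)
    (f0 f0' : ℝ → ℝ) (hf0meas : Measurable f0) (hf0'meas : Measurable f0')
    (hderiv : ∀ x ∈ Set.Icc (0 : ℝ) 1, HasDerivAt f0 (f0' x) x)
    (hcont : ContinuousOn f0' (Set.Icc (0 : ℝ) 1))
    (f : ℕ → ℝ → ℝ) (hf0 : f 0 = f0)
    (hfdef : ∀ n : ℕ, 1 ≤ n → ∀ x : ℝ,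
      f n x = f0 0 + ∫ s in (0 : ℝ)..x, f0' s / (1 - p * s) ^ n) :
    Martingale (fun n ω => f n (X n ω)) ℱ P := by
  -- positivity of the denominator on [0,1]
  have hI : ∀ x ∈ Set.Icc (0:ℝ) 1, (0:ℝ) < 1 - p * x := by
    intro x hx
    nlinarith [hx.1, hx.2]
  have hIne : ∀ (k : ℕ), ∀ x ∈ Set.Icc (0:ℝ) 1, (1 - p * x) ^ k ≠ 0 :=
    fun k x hx => pow_ne_zero _ (ne_of_gt (hI x hx))
  -- continuity of the integrands on [0,1]
  have hcontk : ∀ k : ℕ, ContinuousOn (fun s => f0' s / (1 - p * s) ^ k)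
      (Set.Icc (0:ℝ) 1) := by
    intro k
    exact hcont.div
      (((continuous_const.sub (continuous_const.mul continuous_id)).pow k).continuousOn)
      (fun x hx => hIne k x hx)
  -- derivatives of f k within [0,1]
  have hderivf : ∀ (k : ℕ), ∀ x ∈ Set.Icc (0:ℝ) 1,
      HasDerivWithinAt (f k) (f0' x / (1 - p * x) ^ k) (Set.Icc (0:ℝ) 1) x := by
    intro k x hx
    cases k with
    | zero =>
      simpa [hf0] using (hderiv x hx).hasDerivWithinAt
    | succ k =>
      have hfe : f (k+1) = fun x => f0 0 + ∫ s in (0:ℝ)..x, f0' s / (1 - p * s) ^ (k+1) :=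
        funext (hfdef (k+1) (Nat.le_add_left 1 k))
      rw [hfe]
      haveI : Fact (x ∈ Set.Icc (0:ℝ) 1) := ⟨hx⟩
      have hint : IntervalIntegrable (fun s => f0' s / (1 - p * s) ^ (k+1)) volume 0 x := by
        apply ContinuousOn.intervalIntegrable
        apply (hcontk (k+1)).mono
        rw [Set.uIcc_of_le hx.1]
        exact Set.Icc_subset_Icc le_rfl hx.2
      have hmeas : StronglyMeasurableAtFilter (fun s => f0' s / (1 - p * s) ^ (k+1))
          (nhdsWithin x (Set.Icc (0:ℝ) 1)) volume :=
        ⟨Set.univ, Filter.univ_mem,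
          (hf0'meas.div (((measurable_id.const_mul p).const_sub 1).pow_const
            (k+1))).aestronglyMeasurable⟩
      have hd := intervalIntegral.integral_hasDerivWithinAt_right (s := Set.Icc (0:ℝ) 1) (t := Set.Icc (0:ℝ) 1) hint hmeas
        (hcontk (k+1) x hx)
      exact hd.const_add (f0 0)
  have hdiff : ∀ k : ℕ, DifferentiableOn ℝ (f k) (Set.Icc (0:ℝ) 1) :=
    fun k x hx => (hderivf k x hx).differentiableWithinAt
  have hcontf : ∀ k : ℕ, ContinuousOn (f k) (Set.Icc (0:ℝ) 1) :=
    fun k => (hdiff k).continuousOn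
  -- global measurability of f k
  have hmeasf : ∀ k : ℕ, Measurable (f k) := by
    intro k
    cases k with
    | zero => rw [hf0]; exact hf0meas
    | succ k =>
      rw [funext (hfdef (k+1) (Nat.le_add_left 1 k))]
      exact measurable_const.add (measurable_primitive_aux
        (hf0'meas.div (((measurable_id.const_mul p).const_sub 1).pow_const (k+1))))
  -- value at 0
  have hf_zero : ∀ k : ℕ, f k 0 = f0 0 := by
    intro k
    cases k with
    | zero => rw [hf0]
    | succ k => rw [hfdef (k+1) (Nat.le_add_left 1 k) 0, intervalIntegral.integral_same,
        add_zero]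
  -- the key pointwise identity
  have hkey : ∀ (n : ℕ), ∀ x ∈ Set.Icc (0:ℝ) 1,
      (1 - p * x) * f (n+1) x + p * (∫ y in (0:ℝ)..x, f (n+1) y) = f n x := by
    intro n x hx
    set F : ℝ → ℝ := fun x =>
      (1 - p * x) * f (n+1) x + p * (∫ y in (0:ℝ)..x, f (n+1) y) - f n x with hF
    have hFderiv : ∀ y ∈ Set.Icc (0:ℝ) 1,
        HasDerivWithinAt F 0 (Set.Icc (0:ℝ) 1) y := by
      intro y hy
      haveI : Fact (y ∈ Set.Icc (0:ℝ) 1) := ⟨hy⟩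
      have hlin : HasDerivWithinAt (fun z : ℝ => 1 - p * z) (-p) (Set.Icc (0:ℝ) 1) y := by
        simpa using (((hasDerivAt_id y).const_mul p).const_sub 1).hasDerivWithinAt
      have h1 : HasDerivWithinAt (fun z => (1 - p * z) * f (n+1) z)
          ((-p) * f (n+1) y + (1 - p * y) * (f0' y / (1 - p * y) ^ (n+1)))
          (Set.Icc (0:ℝ) 1) y := hlin.mul (hderivf (n+1) y hy)
      have hint : IntervalIntegrable (f (n+1)) volume 0 y := by
        apply ContinuousOn.intervalIntegrable
        apply (hcontf (n+1)).mono
        rw [Set.uIcc_of_le hy.1]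
        exact Set.Icc_subset_Icc le_rfl hy.2
      have h2 : HasDerivWithinAt (fun z => ∫ u in (0:ℝ)..z, f (n+1) u) (f (n+1) y)
          (Set.Icc (0:ℝ) 1) y :=
        intervalIntegral.integral_hasDerivWithinAt_right (s := Set.Icc (0:ℝ) 1) (t := Set.Icc (0:ℝ) 1) hint
          ⟨Set.univ, Filter.univ_mem, (hmeasf (n+1)).aestronglyMeasurable⟩
          (hcontf (n+1) y hy)
      have h3 := hderivf n y hy
      have hsum := (h1.add (h2.const_mul p)).sub h3
      convert hsum using 1
      any_goals rfl
      have hne : (1 - p * y) ≠ 0 := ne_of_gt (hI y hy)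
      rw [pow_succ, ← div_div, mul_div_cancel₀ _ hne]
      ring
    have hFconst := constant_of_derivWithin_zero
      (fun y hy => (hFderiv y hy).differentiableWithinAt)
      (fun y hy => (hFderiv y (Set.mem_Icc_of_Ico hy)).derivWithin
        (uniqueDiffOn_Icc one_pos y (Set.mem_Icc_of_Ico hy)))
      x hx
    have hF0 : F 0 = 0 := by
      simp [hF, hf_zero n, hf_zero (n+1)]
    have : F x = 0 := hFconst.trans hF0
    simp only [hF] at this
    linarith
  -- X n is ℱ n measurable
  have hXF : ∀ n, Measurable[ℱ n] (X n) := by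
    intro n
    rw [measurable_iff_comap_le, hℱ n]
    exact le_iSup₂ (f := fun i (_ : i ≤ n) => MeasurableSpace.comap (X i)
      Real.measurableSpace) n le_rfl
  have hadp : StronglyAdapted ℱ (fun n ω => f n (X n ω)) :=
    fun n => ((hmeasf n).comp (hXF n)).stronglyMeasurable
  -- integrability
  have hintP : ∀ n, Integrable (fun ω => f n (X n ω)) P := by
    intro n
    obtain ⟨C, hC⟩ := isCompact_Icc.exists_bound_of_continuousOn (hcontf n)
    refine (integrable_const C).mono' ((hmeasf n).comp (hXmeas n)).aestronglyMeasurable ?_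
    filter_upwards [hXmem n] with ω hω
    simpa using hC (X n ω) (Set.mem_Icc_of_Ioc hω)
  -- one-step martingale property
  have hstep : ∀ n : ℕ,
      P[(fun ω => f (n+1) (X (n+1) ω)) | ℱ n] =ᵐ[P] fun ω => f n (X n ω) := by
    intro n
    set c : ℝ → ℝ := fun y => max 0 (min y 1) with hc
    have hcmem : ∀ y, c y ∈ Set.Icc (0:ℝ) 1 :=
      fun y => ⟨le_max_left _ _, max_le zero_le_one (min_le_right _ _)⟩
    have hcid : ∀ y ∈ Set.Icc (0:ℝ) 1, c y = y := by
      intro y hy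
      simp [hc, min_eq_left hy.2, max_eq_right hy.1]
    set g : ℝ → ℝ := fun y => f (n+1) (c y) with hg
    have hgc : Continuous g := (hcontf (n+1)).comp_continuous
      (continuous_const.max (continuous_id.min continuous_const)) hcmem
    obtain ⟨C, hC⟩ := isCompact_Icc.exists_bound_of_continuousOn (hcontf (n+1))
    have hgb : ∃ C : ℝ, ∀ y, |g y| ≤ C :=
      ⟨C, fun y => by simpa [Real.norm_eq_abs] using hC (c y) (hcmem y)⟩
    have h1 := hcond (n+1) (Nat.le_add_left 1 n) g hgc.measurable hgb
    simp only [Nat.add_sub_cancel] at h1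
    have heq1 : (fun ω => f (n+1) (X (n+1) ω)) =ᵐ[P] (fun ω => g (X (n+1) ω)) := by
      filter_upwards [hXmem (n+1)] with ω hω
      simp only [hg]
      rw [hcid _ (Set.mem_Icc_of_Ioc hω)]
    have heq2 : (fun ω => (1 - p * X n ω) * g (X n ω)
        + p * ∫ y in (0:ℝ)..(X n ω), g y) =ᵐ[P] fun ω => f n (X n ω) := by
      filter_upwards [hXmem n] with ω hω
      have hx : X n ω ∈ Set.Icc (0:ℝ) 1 := Set.mem_Icc_of_Ioc hω
      have hgeq : Set.EqOn g (f (n+1)) (Set.uIcc (0:ℝ) (X n ω)) := by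
        intro y hy
        rw [Set.uIcc_of_le hω.1.le] at hy
        simp only [hg]
        rw [hcid _ (Set.Icc_subset_Icc le_rfl hx.2 hy)]
      rw [intervalIntegral.integral_congr hgeq]
      simp only [hg]
      rw [hcid _ hx]
      exact hkey n _ hx
    exact (condExp_congr_ae heq1).trans (h1.trans heq2)
  exact martingale_nat hadp hintP (fun n => (hstep n).symm)
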